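/- Let (λ_n)_{n≥1} be a sequence of complex numbers with |λ_n| ≤ C·exp(−α n^β) for some C, α > 0 and β ≥ 1. Then there exists a constant K such that for all ζ ∈ ℂ with |ζ| sufficiently large, Σ_{n=1}^∞ log(1 + C e^{|ζ|} e^{−α n^β}) ≤ K |ζ|^{1/β + 1}. In particular, log|∏_{n≥1}(1 − e^ζ λ_n)| = O(|ζ|^{1/β + 1}) as |ζ| → ∞. -/

import Mathlib

open Complex

set_option maxHeartbeats 1000000 in
/-- If `|λ_n| ≤ C exp(-α n^β)` with `C, α > 0`, `β ≥ 1`, then for `|ζ|` large,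
`∑_{n≥1} log(1 + C e^{|ζ|} e^{-α n^β}) ≤ K |ζ|^{1/β+1}`; in particular
`log|∏_{n≥1} (1 - e^ζ λ_n)| = O(|ζ|^{1/β+1})` as `|ζ| → ∞`. -/
theorem stmt_9 (C α β : ℝ) (hC : 0 < C) (hα : 0 < α) (hβ : 1 ≤ β) (lam : ℕ → ℂ)
    (hlam : ∀ n : ℕ, ‖lam n‖ ≤ C * Real.exp (-α * ((n + 1 : ℕ) : ℝ) ^ β)) :
    ∃ K R₀ : ℝ, ∀ ζ : ℂ, R₀ ≤ ‖ζ‖ →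
      (∑' n : ℕ, Real.log (1 + C * Real.exp ‖ζ‖ *
          Real.exp (-α * ((n + 1 : ℕ) : ℝ) ^ β))) ≤ K * ‖ζ‖ ^ (1 / β + 1) ∧
      Real.log ‖∏' n : ℕ, (1 - Complex.exp ζ * lam n)‖ ≤ K * ‖ζ‖ ^ (1 / β + 1) := by
  have hβ0 : 0 < β := lt_of_lt_of_le one_pos hβ
  set q : ℝ := Real.exp (-(α/2)) with hq_def
  have hq0 : 0 < q := Real.exp_pos _
  have hq1 : q < 1 := by
    rw [hq_def]
    exact Real.exp_lt_one_iff.mpr (by linarith)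
  set A : ℝ := (2/α) ^ (1/β) + 1 with hA_def
  set B : ℝ := Real.log (1+C) + 1 with hB_def
  set T : ℝ := C * q / (1 - q) with hT_def
  have hA0 : 0 < A := by
    have h : (0:ℝ) ≤ (2/α) ^ (1/β) := Real.rpow_nonneg (by positivity) _
    rw [hA_def]; linarith
  have hB0 : 0 < B := by
    have h : (0:ℝ) ≤ Real.log (1+C) := Real.log_nonneg (by linarith)
    rw [hB_def]; linarith
  have hT0 : 0 ≤ T := by
    rw [hT_def]
    exact div_nonneg (by positivity) (by linarith)
  refine ⟨A*B + T, 1, fun ζ hr => ?_⟩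
  set r : ℝ := ‖ζ‖ with hr_def
  have hr0 : 0 < r := lt_of_lt_of_le one_pos hr
  -- basic power fact
  have pow_ge : ∀ n : ℕ, ((n:ℝ)+1) ≤ (((n+1:ℕ)):ℝ) ^ β := by
    intro n
    have h1 : (1:ℝ) ≤ ((n+1:ℕ):ℝ) := by exact_mod_cast Nat.one_le_iff_ne_zero.mpr (Nat.succ_ne_zero n)
    calc ((n:ℝ)+1) = ((n+1:ℕ):ℝ) ^ (1:ℝ) := by rw [Real.rpow_one]; push_cast; ring
      _ ≤ _ := Real.rpow_le_rpow_of_exponent_le h1 hβ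
  set c : ℕ → ℝ := fun n => C * Real.exp r * Real.exp (-α * ((n + 1 : ℕ) : ℝ) ^ β) with hc_def
  set f : ℕ → ℝ := fun n => Real.log (1 + c n) with hf_def
  have hc0 : ∀ n, 0 < c n := fun n => by rw [hc_def]; positivity
  have hf0 : ∀ n, 0 ≤ f n := fun n => Real.log_nonneg (by linarith [hc0 n])
  have hfc : ∀ n, f n ≤ c n := by
    intro n
    have := Real.log_le_sub_one_of_pos (show (0:ℝ) < 1 + c n by linarith [hc0 n])
    simpa [hf_def] using this
  -- summability of f
  have hcle : ∀ n, c n ≤ (C * Real.exp r) * (Real.exp (-α)) ^ n := by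
    intro n
    have h1 : -α * ((n+1:ℕ):ℝ) ^ β ≤ -α * ((n:ℝ)+1) := by
      have := pow_ge n
      nlinarith
    have h2 : Real.exp (-α * ((n+1:ℕ):ℝ) ^ β) ≤ Real.exp (-α * ((n:ℝ)+1)) := Real.exp_le_exp.mpr h1
    have h3 : Real.exp (-α * ((n:ℝ)+1)) ≤ Real.exp (-α * (n:ℝ)) :=
      Real.exp_le_exp.mpr (by nlinarith)
    have h4 : Real.exp (-α * (n:ℝ)) = (Real.exp (-α)) ^ n := by
      rw [← Real.exp_nat_mul]; ring_nf
    rw [hc_def]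
    calc C * Real.exp r * Real.exp (-α * ((n+1:ℕ):ℝ) ^ β)
        ≤ C * Real.exp r * Real.exp (-α * (n:ℝ)) := by
          apply mul_le_mul_of_nonneg_left (h2.trans h3) (by positivity)
      _ = (C * Real.exp r) * (Real.exp (-α)) ^ n := by rw [h4]
  have hSum : Summable f := by
    apply Summable.of_nonneg_of_le hf0 (fun n => (hfc n).trans (hcle n))
    exact (summable_geometric_of_lt_one (Real.exp_pos _).le
      (Real.exp_lt_one_iff.mpr (by linarith))).mul_left _
  -- splitting point
  set n₀ : ℕ := ⌈(2*r/α) ^ (1/β)⌉₊ with hn₀_def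
  -- finite part bound
  have hterm : ∀ n, f n ≤ Real.log (1+C) + r := by
    intro n
    have e1 : Real.exp (-α * ((n+1:ℕ):ℝ) ^ β) ≤ 1 := by
      apply Real.exp_le_one_iff.mpr
      have := pow_ge n
      nlinarith
    have h2 : (1:ℝ) ≤ Real.exp r := Real.one_le_exp hr0.le
    have h1 : 1 + c n ≤ (1+C) * Real.exp r := by
      have h3 : c n ≤ C * Real.exp r := by
        simp only [hc_def]
        calc C * Real.exp r * Real.exp (-α * ((n+1:ℕ):ℝ) ^ β)
            ≤ C * Real.exp r * 1 := mul_le_mul_of_nonneg_left e1 (by positivity)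
          _ = C * Real.exp r := mul_one _
      nlinarith
    calc f n ≤ Real.log ((1+C) * Real.exp r) := by
          exact (Real.log_le_log_iff (by linarith [hc0 n]) (by positivity)).mpr h1
      _ = Real.log (1+C) + r := by
          rw [Real.log_mul (by linarith) (Real.exp_ne_zero _), Real.log_exp]
  have hfin : ∑ i ∈ Finset.range n₀, f i ≤ (n₀ : ℝ) * (Real.log (1+C) + r) := by
    calc ∑ i ∈ Finset.range n₀, f i ≤ ∑ i ∈ Finset.range n₀, (Real.log (1+C) + r) :=
          Finset.sum_le_sum (fun i _ => hterm i)
      _ = (n₀ : ℝ) * (Real.log (1+C) + r) := by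
          rw [Finset.sum_const, Finset.card_range, nsmul_eq_mul]
  -- tail bound
  have htail_term : ∀ n : ℕ, f (n + n₀) ≤ (C*q) * q ^ n := by
    intro n
    set m : ℝ := ((n + n₀ + 1 : ℕ) : ℝ) with hm_def
    have hm1 : (1:ℝ) ≤ m := by
      rw [hm_def]; exact_mod_cast Nat.one_le_iff_ne_zero.mpr (by omega)
    have hX0 : (0:ℝ) ≤ (2*r/α) ^ (1/β) := Real.rpow_nonneg (by positivity) _
    have hXm : (2*r/α) ^ (1/β) ≤ m := by
      calc (2*r/α) ^ (1/β) ≤ (n₀:ℝ) := Nat.le_ceil _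
        _ ≤ m := by rw [hm_def]; push_cast; linarith [Nat.cast_nonneg (α := ℝ) n]
    have hmβ : 2*r/α ≤ m ^ β := by
      have h := Real.rpow_le_rpow hX0 hXm hβ0.le
      rwa [← Real.rpow_mul (by positivity),
        one_div_mul_cancel (ne_of_gt hβ0), Real.rpow_one] at h

    have hrm : r ≤ (α/2) * m ^ β := by
      have : 2*r ≤ α * m ^ β := by
        rw [div_le_iff₀ hα] at hmβ
        linarith [hmβ]
      linarith
    have hmm : m ≤ m ^ β := by
      calc m = m ^ (1:ℝ) := (Real.rpow_one m).symm
        _ ≤ m ^ β := Real.rpow_le_rpow_of_exponent_le hm1 hβ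
    have hkey : r + -α * m ^ β ≤ -(α/2) * ((n:ℝ)+1) := by
      have hnn : (n:ℝ)+1 ≤ m := by rw [hm_def]; push_cast; linarith [Nat.cast_nonneg (α := ℝ) n₀]
      nlinarith
    have hfnn := hfc (n + n₀)
    have hcval : c (n + n₀) = C * Real.exp (r + -α * m ^ β) := by
      rw [hc_def, Real.exp_add]
      rw [hm_def]
      push_cast
      ring_nf
    have hq_pow : Real.exp (-(α/2) * ((n:ℝ)+1)) = q ^ (n+1) := by
      rw [hq_def, ← Real.exp_nat_mul]
      push_cast
      ring_nf
    calc f (n + n₀) ≤ c (n + n₀) := hfnn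
      _ = C * Real.exp (r + -α * m ^ β) := hcval
      _ ≤ C * Real.exp (-(α/2) * ((n:ℝ)+1)) := by
          apply mul_le_mul_of_nonneg_left (Real.exp_le_exp.mpr hkey) hC.le
      _ = C * q ^ (n+1) := by rw [hq_pow]
      _ = (C*q) * q ^ n := by ring
  have htail_summable : Summable (fun n => f (n + n₀)) := (summable_nat_add_iff n₀).mpr hSum
  have hgeom : Summable (fun n : ℕ => (C*q) * q ^ n) :=
    (summable_geometric_of_lt_one hq0.le hq1).mul_left _
  have htail : ∑' n, f (n + n₀) ≤ T := by
    calc ∑' n, f (n + n₀) ≤ ∑' n : ℕ, (C*q) * q ^ n :=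
          Summable.tsum_le_tsum htail_term htail_summable hgeom
      _ = (C*q) * (1-q)⁻¹ := by rw [tsum_mul_left, tsum_geometric_of_lt_one hq0.le hq1]
      _ = T := by rw [hT_def]; ring
  -- size of n₀
  have hr1β : (1:ℝ) ≤ r ^ (1/β) := Real.one_le_rpow hr (by positivity)
  have hn₀_le : (n₀ : ℝ) ≤ A * r ^ (1/β) := by
    have h1 : (n₀ : ℝ) ≤ (2*r/α) ^ (1/β) + 1 := (Nat.ceil_lt_add_one (Real.rpow_nonneg (by positivity) _)).le
    have h2 : (2*r/α) ^ (1/β) = (2/α) ^ (1/β) * r ^ (1/β) := by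
      rw [← Real.mul_rpow (by positivity) hr0.le]
      ring_nf
    have h3 : (0:ℝ) ≤ (2/α) ^ (1/β) := Real.rpow_nonneg (by positivity) _
    rw [hA_def]
    nlinarith
  have hlogr : Real.log (1+C) + r ≤ B * r := by
    have hl : (0:ℝ) ≤ Real.log (1+C) := Real.log_nonneg (by linarith)
    rw [hB_def]
    nlinarith
  have hrpow : r ^ (1/β + 1) = r ^ (1/β) * r := by
    rw [Real.rpow_add hr0, Real.rpow_one]
  have hrpow1 : (1:ℝ) ≤ r ^ (1/β + 1) := Real.one_le_rpow hr (by positivity)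
  -- main tsum bound
  have hmain : ∑' n, f n ≤ (A*B + T) * r ^ (1/β + 1) := by
    have hsplit : ∑ i ∈ Finset.range n₀, f i + ∑' n, f (n + n₀) = ∑' n, f n :=
      Summable.sum_add_tsum_nat_add n₀ hSum
    have h1 : ∑ i ∈ Finset.range n₀, f i ≤ A * B * r ^ (1/β + 1) := by
      calc ∑ i ∈ Finset.range n₀, f i ≤ (n₀ : ℝ) * (Real.log (1+C) + r) := hfin
        _ ≤ (A * r ^ (1/β)) * (B * r) := by
            apply mul_le_mul hn₀_le hlogr (by nlinarith [hf0 0]) (by positivity)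
        _ = A * B * r ^ (1/β + 1) := by rw [hrpow]; ring
    have h2 : ∑' n, f (n + n₀) ≤ T * r ^ (1/β + 1) := by
      calc ∑' n, f (n + n₀) ≤ T := htail
        _ ≤ T * r ^ (1/β + 1) := le_mul_of_one_le_right hT0 hrpow1
    linarith [hsplit]
  have htsum0 : 0 ≤ ∑' n, f n := tsum_nonneg hf0
  constructor
  · exact hmain
  -- part 2
  · set w : ℕ → ℂ := fun n => Complex.exp ζ * lam n with hw_def
    have hwle : ∀ n, ‖w n‖ ≤ c n := by
      intro n
      rw [hw_def, hc_def]
      simp only [norm_mul]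
      have h1 : ‖Complex.exp ζ‖ ≤ Real.exp r := by
        rw [Complex.norm_exp]
        exact Real.exp_le_exp.mpr (Complex.re_le_norm ζ)
      calc ‖Complex.exp ζ‖ * ‖lam n‖ ≤ Real.exp r * (C * Real.exp (-α * ((n+1:ℕ):ℝ) ^ β)) := by
            apply mul_le_mul h1 (hlam n) (norm_nonneg _) (Real.exp_pos _).le
        _ = C * Real.exp r * Real.exp (-α * ((n+1:ℕ):ℝ) ^ β) := by ring
    have hnorm1 : ∀ n, ‖(1:ℂ) - w n‖ ≤ 1 + c n := by
      intro n
      calc ‖(1:ℂ) - w n‖ ≤ ‖(1:ℂ)‖ + ‖w n‖ := norm_sub_le _ _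
        _ ≤ 1 + c n := by rw [norm_one]; linarith [hwle n]
    -- bound on partial products
    have hpartial : ∀ m : ℕ, ‖∏ n ∈ Finset.range m, ((1:ℂ) - w n)‖ ≤ Real.exp (∑' n, f n) := by
      intro m
      calc ‖∏ n ∈ Finset.range m, ((1:ℂ) - w n)‖ = ∏ n ∈ Finset.range m, ‖(1:ℂ) - w n‖ :=
            norm_prod _ _
        _ ≤ ∏ n ∈ Finset.range m, (1 + c n) := by
            apply Finset.prod_le_prod (fun n _ => norm_nonneg _) (fun n _ => hnorm1 n)
        _ = ∏ n ∈ Finset.range m, Real.exp (f n) := by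
            apply Finset.prod_congr rfl
            intro n _
            rw [hf_def]
            exact (Real.exp_log (by linarith [hc0 n])).symm
        _ = Real.exp (∑ n ∈ Finset.range m, f n) := (Real.exp_sum _ _).symm
        _ ≤ Real.exp (∑' n, f n) := Real.exp_le_exp.mpr (Summable.sum_le_tsum _ (fun i _ => hf0 i) hSum)
    -- the infinite product is bounded
    have hprod_le : ‖∏' n, ((1:ℂ) - w n)‖ ≤ Real.exp (∑' n, f n) := by
      by_cases hmult : Multipliable (fun n => (1:ℂ) - w n)
      · have hP := hmult.hasProd.tendsto_prod_nat
        have hPn : Filter.Tendsto (fun m => ‖∏ n ∈ Finset.range m, ((1:ℂ) - w n)‖)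
            Filter.atTop (nhds ‖∏' n, ((1:ℂ) - w n)‖) := hP.norm
        exact le_of_tendsto hPn (Filter.Eventually.of_forall hpartial)
      · rw [tprod_eq_one_of_not_multipliable hmult]
        simpa using Real.one_le_exp htsum0
    have hlog2 : Real.log ‖∏' n, ((1:ℂ) - w n)‖ ≤ ∑' n, f n := by
      rcases eq_or_lt_of_le (norm_nonneg (∏' n, ((1:ℂ) - w n))) with h | h
      · rw [← h, Real.log_zero]; exact htsum0
      · exact (Real.log_le_iff_le_exp h).mpr hprod_le
    calc Real.log ‖∏' n, ((1:ℂ) - w n)‖ ≤ ∑' n, f n := hlog2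
      _ ≤ (A*B + T) * r ^ (1/β + 1) := hmain
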